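/- Let u be a word over Σ whose arch factorization has empty rest, i.e., r(u) = ε. Then for every word v over Σ, ι(uv) = ι(u) + ι(v). -/

import Mathlib

open List

section Defs

variable {α : Type*}

/-- A word `w` is `k`-universal if every word of length at most `k` is a subsequence of `w`. -/
def IsKUniversal [Fintype α] (k : ℕ) (w : List α) : Prop :=
  ∀ u : List α, u.length ≤ k → u.Sublist w

/-- The universality index `ι(w)`: the largest `k` such that `w` is `k`-universal. -/
noncomputable def univIndex [Fintype α] (w : List α) : ℕ :=
  sSup {k | IsKUniversal k w}

/-- `c`-fold concatenation (power) of a word. -/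
def wpow (u : List α) (c : ℕ) : List α := (List.replicate c u).flatten

/-- Auxiliary (fuelled) computation of the arch factorization: returns the list of
arches and the rest. Each arch is the shortest prefix of the remaining suffix
containing every letter of the alphabet. -/
noncomputable def archFactAux [Fintype α] [DecidableEq α] :
    ℕ → List α → List (List α) × List α
  | 0, w => ([], w)
  | fuel + 1, w =>
    if Finset.univ ⊆ w.toFinset then
      let n := sInf {n | Finset.univ ⊆ (w.take n).toFinset}
      let p := archFactAux fuel (w.drop n)
      (w.take n :: p.1, p.2)
    else ([], w)

/-- The arch factorization of `w`: the list of arches together with the rest. -/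
noncomputable def archFact [Fintype α] [DecidableEq α] (w : List α) :
    List (List α) × List α :=
  archFactAux w.length w

/-- `γ(w)`: the distinct letters of `w` in order of their first occurrence. -/
def gammaWord [DecidableEq α] (w : List α) : List α := w.reverse.dedup.reverse

/-- The suffix of `w` strictly after the first occurrence of the letter `a`. -/
def afterFirst [DecidableEq α] (a : α) (w : List α) : List α :=
  w.drop (w.idxOf a + 1)

/-- `ι_a(w)`: the universality index of the suffix of `w` after the first occurrence of `a`. -/
noncomputable def iotaLetter [Fintype α] [DecidableEq α] (a : α) (w : List α) : ℕ :=
  univIndex (afterFirst a w)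

/-- `R_a(w)`: the alphabet of the rest of the arch factorization of the suffix of `w`
after the first occurrence of `a`. -/
noncomputable def restLetter [Fintype α] [DecidableEq α] (a : α) (w : List α) : Finset α :=
  ((archFact (afterFirst a w)).2).toFinset

/-- `Subseq_k(w)`: the set of subsequences of `w` of length at most `k`. -/
def subseqK (k : ℕ) (w : List α) : Set (List α) :=
  {u | u.length ≤ k ∧ u.Sublist w}

/-- Simon's congruence `u ∼_k v`. -/
def SimonCongr (k : ℕ) (u v : List α) : Prop := subseqK k u = subseqK k v

/-- Applying a substitution `h` to a pattern: replace each variable occurrence by its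
image and leave terminal letters unchanged. -/
def applySub {X : Type*} (h : X → List α) (p : List (α ⊕ X)) : List α :=
  p.flatMap (Sum.elim (fun a => [a]) h)

/-- A permutation word of the alphabet: every letter occurs exactly once. -/
def IsPermWord [DecidableEq α] (γ : List α) : Prop :=
  ∀ a : α, γ.count a = 1

end Defs

section Aux
set_option linter.unusedSectionVars false


variable {α : Type*} [Fintype α] [DecidableEq α] [Nonempty α]

lemma not_full_nil : ¬ (Finset.univ ⊆ (([] : List α).toFinset)) := by
  intro h
  exact absurd (h (Finset.mem_univ (Classical.arbitrary α))) (by simp)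

lemma archFactAux_nil (f : ℕ) : archFactAux f ([] : List α) = ([], []) := by
  cases f with
  | zero => rfl
  | succ f => simp only [archFactAux, if_neg (not_full_nil (α := α))]

lemma archFact_nil : archFact ([] : List α) = ([], []) := archFactAux_nil 0

lemma archFact_not_full {w : List α} (h : ¬ Finset.univ ⊆ w.toFinset) :
    archFact w = ([], w) := by
  unfold archFact
  cases w with
  | nil => exact archFactAux_nil 0
  | cons a t => simp only [List.length_cons, archFactAux, if_neg h]

lemma sInf_arch_pos {w : List α} (h : Finset.univ ⊆ w.toFinset) :
    0 < sInf {n | Finset.univ ⊆ (w.take n).toFinset} ∧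
    sInf {n | Finset.univ ⊆ (w.take n).toFinset} ≤ w.length ∧
    Finset.univ ⊆ (w.take (sInf {n | Finset.univ ⊆ (w.take n).toFinset})).toFinset := by
  have hmem : w.length ∈ {n | Finset.univ ⊆ (w.take n).toFinset} := by
    simpa [List.take_length] using h
  have hne : {n | Finset.univ ⊆ (w.take n).toFinset}.Nonempty := ⟨_, hmem⟩
  have hinf := Nat.sInf_mem hne
  refine ⟨?_, Nat.sInf_le hmem, hinf⟩
  rcases Nat.eq_zero_or_pos (sInf {n | Finset.univ ⊆ (w.take n).toFinset}) with h0 | h0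
  · exfalso
    rw [h0] at hinf
    simpa using not_full_nil (α := α) hinf
  · exact h0

lemma archFactAux_congr : ∀ (f g : ℕ) (w : List α), w.length ≤ f → w.length ≤ g →
    archFactAux f w = archFactAux g w := by
  intro f
  induction f with
  | zero =>
    intro g w hf _
    have : w = [] := List.eq_nil_of_length_eq_zero (Nat.le_zero.mp hf)
    subst this
    rw [archFactAux_nil, archFactAux_nil]
  | succ f ih =>
    intro g w hf hg
    cases g with
    | zero =>
      have : w = [] := List.eq_nil_of_length_eq_zero (Nat.le_zero.mp hg)
      subst this
      rw [archFactAux_nil, archFactAux_nil]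
    | succ g =>
      by_cases h : Finset.univ ⊆ w.toFinset
      · obtain ⟨hpos, hle, -⟩ := sInf_arch_pos h
        have hdrop : (w.drop (sInf {n | Finset.univ ⊆ (w.take n).toFinset})).length ≤ f := by
          rw [List.length_drop]; omega
        have hdrop' : (w.drop (sInf {n | Finset.univ ⊆ (w.take n).toFinset})).length ≤ g := by
          rw [List.length_drop]; omega
        simp only [archFactAux, if_pos h]
        rw [ih g _ hdrop hdrop']
      · simp only [archFactAux, if_neg h]

lemma archFact_step {w : List α} (h : Finset.univ ⊆ w.toFinset) :
    archFact w = (w.take (sInf {n | Finset.univ ⊆ (w.take n).toFinset}) ::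
        (archFact (w.drop (sInf {n | Finset.univ ⊆ (w.take n).toFinset}))).1,
      (archFact (w.drop (sInf {n | Finset.univ ⊆ (w.take n).toFinset}))).2) := by
  obtain ⟨hpos, hle, -⟩ := sInf_arch_pos h
  have hw : w ≠ [] := by rintro rfl; exact not_full_nil h
  obtain ⟨k, hk⟩ : ∃ k, w.length = k + 1 := by
    cases w with
    | nil => exact absurd rfl hw
    | cons a t => exact ⟨t.length, rfl⟩
  unfold archFact
  rw [hk]
  simp only [archFactAux, if_pos h]
  rw [archFactAux_congr k _ _ (by rw [List.length_drop]; omega)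
    (le_of_eq rfl)]

lemma archFact_spec_aux : ∀ (N : ℕ) (w : List α), w.length ≤ N →
    (archFact w).1.flatten ++ (archFact w).2 = w ∧
    (∀ a ∈ (archFact w).1, (∃ p c, a = p ++ [c] ∧ c ∉ p) ∧ Finset.univ ⊆ a.toFinset) ∧
    ¬ Finset.univ ⊆ ((archFact w).2).toFinset := by
  intro N
  induction N with
  | zero =>
    intro w hw
    have : w = [] := List.eq_nil_of_length_eq_zero (Nat.le_zero.mp hw)
    subst this
    rw [archFact_nil]
    exact ⟨rfl, by simp, not_full_nil⟩
  | succ N ih =>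
    intro w hw
    by_cases h : Finset.univ ⊆ w.toFinset
    · obtain ⟨hpos, hle, hfull⟩ := sInf_arch_pos h
      set n := sInf {n | Finset.univ ⊆ (w.take n).toFinset} with hn
      have hstep := archFact_step h
      have hdroplen : (w.drop n).length ≤ N := by rw [List.length_drop]; omega
      obtain ⟨ih1, ih2, ih3⟩ := ih (w.drop n) hdroplen
      refine ⟨?_, ?_, ?_⟩
      · rw [hstep]
        simp only [List.flatten_cons, List.append_assoc, ih1]
        exact (congrArg (w.take n ++ ·) ih1).trans (List.take_append_drop n w)
      · rw [hstep]
        intro a ha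
        rcases List.mem_cons.mp ha with rfl | ha
        · refine ⟨?_, hfull⟩
          -- a = w.take n, n = (n-1)+1
          obtain ⟨m, hm⟩ : ∃ m, n = m + 1 := ⟨n - 1, by omega⟩
          have hmlt : m < w.length := by omega
          have hmnot : ¬ Finset.univ ⊆ (w.take m).toFinset := by
            intro hc
            have h9 : n ≤ m := Nat.sInf_le hc
            omega
          obtain ⟨x, hx⟩ : ∃ x, x ∉ (w.take m).toFinset := by
            by_contra hc
            push_neg at hc
            exact hmnot fun y _ => hc y
          have htake : w.take n = w.take m ++ [w[m]] := by
            rw [hm, List.take_succ, List.getElem?_eq_getElem hmlt]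
            rfl
          refine ⟨w.take m, w[m], htake, ?_⟩
          have hxn : x ∈ (w.take n).toFinset := hfull (Finset.mem_univ x)
          rw [htake] at hxn
          simp only [List.toFinset_append, Finset.mem_union, List.toFinset_cons,
            List.toFinset_nil, Finset.mem_insert, Finset.mem_singleton] at hxn
          rcases hxn with hxn | hxn
          · exact absurd hxn hx
          · rcases hxn with rfl | hf
            · intro hmem
              exact hx (List.mem_toFinset.mpr hmem)
            · simp at hf
        · exact ih2 a ha
      · rw [hstep]
        exact ih3
    · rw [archFact_not_full h]
      exact ⟨rfl, by simp, h⟩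

lemma archFact_spec (w : List α) :
    (archFact w).1.flatten ++ (archFact w).2 = w ∧
    (∀ a ∈ (archFact w).1, (∃ p c, a = p ++ [c] ∧ c ∉ p) ∧ Finset.univ ⊆ a.toFinset) ∧
    ¬ Finset.univ ⊆ ((archFact w).2).toFinset :=
  archFact_spec_aux w.length w le_rfl

lemma archFact_append_aux : ∀ (N : ℕ) (u : List α), u.length ≤ N → (archFact u).2 = [] →
    ∀ v : List α, archFact (u ++ v) = ((archFact u).1 ++ (archFact v).1, (archFact v).2) := by
  intro N
  induction N with
  | zero =>
    intro u hu _ v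
    have : u = [] := List.eq_nil_of_length_eq_zero (Nat.le_zero.mp hu)
    subst this
    rw [archFact_nil]
    simp
  | succ N ih =>
    intro u hu hrest v
    by_cases hnil : u = []
    · subst hnil
      rw [archFact_nil]
      simp
    by_cases h : Finset.univ ⊆ u.toFinset
    · obtain ⟨hpos, hle, hfull⟩ := sInf_arch_pos h
      set n := sInf {n | Finset.univ ⊆ (u.take n).toFinset} with hn
      have huv : Finset.univ ⊆ (u ++ v).toFinset := by
        intro x hx
        rw [List.toFinset_append, Finset.mem_union]
        exact Or.inl (h hx)
      -- the sInf for u ++ v equals n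
      have hSeq : sInf {m | Finset.univ ⊆ ((u ++ v).take m).toFinset} = n := by
        have h1 : n ∈ {m | Finset.univ ⊆ ((u ++ v).take m).toFinset} := by
          show Finset.univ ⊆ ((u ++ v).take n).toFinset
          rw [List.take_append_of_le_length hle]
          exact hfull
        have h2 : sInf {m | Finset.univ ⊆ ((u ++ v).take m).toFinset} ≤ n := Nat.sInf_le h1
        have h3 := Nat.sInf_mem (⟨n, h1⟩ : {m | Finset.univ ⊆ ((u ++ v).take m).toFinset}.Nonempty)
        have h4 : Finset.univ ⊆ (u.take (sInf {m | Finset.univ ⊆ ((u ++ v).take m).toFinset})).toFinset := by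
          have heq := List.take_append_of_le_length
            (l₁ := u) (l₂ := v) (i := sInf {m | Finset.univ ⊆ ((u ++ v).take m).toFinset}) (by omega)
          have h3' : Finset.univ ⊆ ((u ++ v).take
              (sInf {m | Finset.univ ⊆ ((u ++ v).take m).toFinset})).toFinset := h3
          rw [heq] at h3'
          exact h3'
        have h5 : n ≤ sInf {m | Finset.univ ⊆ ((u ++ v).take m).toFinset} := Nat.sInf_le h4
        omega
      have hstepu := archFact_step h
      rw [← hn] at hstepu
      have hstepuv := archFact_step huv
      rw [hSeq] at hstepuv
      have hdrop : (u ++ v).drop n = u.drop n ++ v := List.drop_append_of_le_length hle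
      have hsub : (archFact (u.drop n)).2 = [] := by
        rw [hstepu] at hrest
        exact hrest
      have hdroplen : (u.drop n).length ≤ N := by rw [List.length_drop]; omega
      have hih := ih (u.drop n) hdroplen hsub v
      rw [hstepuv, hdrop, hih, hstepu]
      rw [List.take_append_of_le_length hle]
      rfl
    · exfalso
      rw [archFact_not_full h] at hrest
      exact hnil hrest

/-- word of length ≤ number of full blocks embeds into the flatten. -/
lemma sublist_flatten_of_full : ∀ (L : List (List α)),
    (∀ a ∈ L, Finset.univ ⊆ a.toFinset) → ∀ x : List α, x.length ≤ L.length →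
    x.Sublist L.flatten := by
  intro L
  induction L with
  | nil =>
    intro _ x hx
    have : x = [] := List.eq_nil_of_length_eq_zero (Nat.le_zero.mp hx)
    subst this
    exact List.nil_sublist _
  | cons a L ih =>
    intro hfull x hx
    cases x with
    | nil => exact List.nil_sublist _
    | cons b t =>
      have hb : b ∈ a := List.mem_toFinset.mp (hfull a (List.mem_cons_self) (Finset.mem_univ b))
      obtain ⟨s, r, hsr⟩ := List.append_of_mem hb
      have ht : t.Sublist L.flatten := ih (fun c hc => hfull c (List.mem_cons_of_mem a hc)) t
        (by simpa using Nat.succ_le_succ_iff.mp (by simpa using hx))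
      have h1 : (b :: t).Sublist (b :: (r ++ L.flatten)) :=
        List.Sublist.cons₂ b (ht.trans (List.sublist_append_right r _))
      have h2 : (b :: (r ++ L.flatten)).Sublist (s ++ (b :: (r ++ L.flatten))) :=
        List.sublist_append_right s _
      have h3 := h1.trans h2
      rw [List.flatten_cons, hsr]
      simpa [List.append_assoc] using h3
    
lemma sublist_cons_elim {d : α} {p ys tail : List α} (hd : d ∉ p)
    (h : (d :: ys).Sublist ((p ++ [d]) ++ tail)) : ys.Sublist tail := by
  rw [List.append_assoc] at h
  rcases List.sublist_append_iff.mp h with ⟨x₁, x₂, hx, h1, h2⟩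
  cases x₁ with
  | nil =>
    rw [List.nil_append] at hx
    subst hx
    -- h2 : d :: ys <+ [d] ++ tail
    rw [List.singleton_append] at h2
    exact List.cons_sublist_cons.mp h2
  | cons e x₁ =>
    rw [List.cons_append] at hx
    injection hx with he hx
    subst he
    exact absurd (h1.subset (List.mem_cons_self)) hd

lemma bad_word_not_sublist : ∀ (ps : List (List α × α)) (rest : List α) (c : α),
    (∀ pr ∈ ps, pr.2 ∉ pr.1) → c ∉ rest →
    ¬ ((ps.map Prod.snd) ++ [c]).Sublist
        ((ps.map (fun pr => pr.1 ++ [pr.2])).flatten ++ rest) := by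
  intro ps
  induction ps with
  | nil =>
    intro rest c _ hc hsub
    simp only [List.map_nil, List.nil_append, List.flatten_nil] at hsub
    exact hc (List.singleton_sublist.mp hsub)
  | cons pr ps ih =>
    intro rest c hps hc hsub
    simp only [List.map_cons, List.cons_append, List.flatten_cons, List.append_assoc] at hsub
    have h' : ((ps.map Prod.snd) ++ [c]).Sublist
        ((ps.map (fun pr => pr.1 ++ [pr.2])).flatten ++ rest) := by
      apply sublist_cons_elim (hps pr (List.mem_cons_self))
      rw [List.append_assoc]
      exact hsub
    exact ih rest c (fun q hq => hps q (List.mem_cons_of_mem pr hq)) hc h'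

lemma exists_pairs : ∀ (L : List (List α)),
    (∀ a ∈ L, ∃ p c, a = p ++ [c] ∧ c ∉ p) →
    ∃ ps : List (List α × α), L = ps.map (fun pr => pr.1 ++ [pr.2]) ∧
      ∀ pr ∈ ps, pr.2 ∉ pr.1 := by
  intro L
  induction L with
  | nil => exact fun _ => ⟨[], rfl, by simp⟩
  | cons a L ih =>
    intro h
    obtain ⟨p, c, hac, hcp⟩ := h a (List.mem_cons_self)
    obtain ⟨ps, hps1, hps2⟩ := ih (fun b hb => h b (List.mem_cons_of_mem a hb))
    refine ⟨(p, c) :: ps, ?_, ?_⟩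
    · rw [List.map_cons, ← hps1, ← hac]
    · intro q hq
      rcases List.mem_cons.mp hq with rfl | hq
      · exact hcp
      · exact hps2 q hq

lemma isKUniversal_zero (w : List α) : IsKUniversal 0 w := by
  intro x hx
  have : x = [] := List.eq_nil_of_length_eq_zero (Nat.le_zero.mp hx)
  subst this
  exact List.nil_sublist w

lemma isKUniversal_mono {k j : ℕ} {w : List α} (h : IsKUniversal k w) (hj : j ≤ k) :
    IsKUniversal j w := fun x hx => h x (hx.trans hj)

lemma bddAbove_univ (w : List α) : BddAbove {k | IsKUniversal k w} := by
  refine ⟨w.length, fun k hk => ?_⟩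
  have := hk (List.replicate k (Classical.arbitrary α)) (by simp)
  simpa using this.length_le

lemma univIndex_eq {w : List α} {m : ℕ} (h1 : IsKUniversal m w)
    (h2 : ¬ IsKUniversal (m + 1) w) : univIndex w = m := by
  apply _root_.le_antisymm
  · show sSup {k | IsKUniversal k w} ≤ m
    refine csSup_le (s := {k | IsKUniversal k w}) ⟨0, isKUniversal_zero w⟩ ?_
    intro k hk
    by_contra hc
    push_neg at hc
    exact h2 (isKUniversal_mono hk hc)
  · show m ≤ sSup {k | IsKUniversal k w}
    exact le_csSup (s := {k | IsKUniversal k w}) (bddAbove_univ w) h1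

lemma univIndex_eq_archCount (w : List α) : univIndex w = (archFact w).1.length := by
  obtain ⟨heq, harch, hrest⟩ := archFact_spec w
  apply univIndex_eq
  · intro x hx
    have h1 : x.Sublist (archFact w).1.flatten :=
      sublist_flatten_of_full _ (fun a ha => (harch a ha).2) x hx
    have h2 : (archFact w).1.flatten.Sublist w := by
      conv_rhs => rw [← heq]
      exact List.sublist_append_left _ _
    exact h1.trans h2
  · intro hK
    obtain ⟨ps, hps1, hps2⟩ := exists_pairs (archFact w).1 (fun a ha => (harch a ha).1)
    obtain ⟨c, hc⟩ : ∃ c, c ∉ (archFact w).2 := by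
      by_contra hcon
      push_neg at hcon
      exact hrest fun y _ => List.mem_toFinset.mpr (hcon y)
    have hlen : ((ps.map Prod.snd) ++ [c]).length ≤ (archFact w).1.length + 1 := by
      simp [hps1]
    have hsub := hK _ hlen
    rw [← heq, hps1] at hsub
    exact bad_word_not_sublist ps (archFact w).2 c hps2 hc hsub

end Aux

/-- if the rest of the arch factorization of `u` is empty, then the
universality index is additive on `u ++ v`. -/
theorem stmt18 {α : Type*} [Fintype α] [DecidableEq α] [Nonempty α]
    (u : List α) (hu : (archFact u).2 = []) (v : List α) :
    univIndex (u ++ v) = univIndex u + univIndex v := by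
  have h := archFact_append_aux u.length u le_rfl hu v
  rw [univIndex_eq_archCount (u ++ v), univIndex_eq_archCount u, univIndex_eq_archCount v, h]
  simp
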